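/- Let X be a compact Hausdorff space of weight κ which is a continuous image of A(μ)^τ for some infinite cardinal μ and some cardinal τ. Then X is a continuous image of A(μ)^κ. -/

import Mathlib

open Cardinal Set Function

universe u

noncomputable section

/-- The density of a topological space: least cardinality of a dense subset. -/
def tdensity (X : Type u) [TopologicalSpace X] : Cardinal.{u} :=
  sInf {c : Cardinal.{u} | ∃ s : Set X, Dense s ∧ #s = c}

/-- The weight of a topological space: least cardinality of a base. -/
def tweight (X : Type u) [TopologicalSpace X] : Cardinal.{u} :=
  sInf {c : Cardinal.{u} | ∃ B : Set (Set X), TopologicalSpace.IsTopologicalBasis B ∧ #B = c}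

/-- The π-weight: least cardinality of a π-base. -/
def piWeight (X : Type u) [TopologicalSpace X] : Cardinal.{u} :=
  sInf {c : Cardinal.{u} | ∃ B : Set (Set X),
    (∀ U ∈ B, IsOpen U ∧ U.Nonempty) ∧
    (∀ V : Set X, IsOpen V → V.Nonempty → ∃ U ∈ B, U ⊆ V) ∧ #B = c}

/-- ĉ(X): the least cardinal κ such that X has no pairwise disjoint family of κ
nonempty open sets. -/
def hatCell (X : Type u) [TopologicalSpace X] : Cardinal.{u} :=
  sInf {c : Cardinal.{u} | ¬ ∃ 𝒰 : Set (Set X),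
    (∀ U ∈ 𝒰, IsOpen U ∧ U.Nonempty) ∧ 𝒰.PairwiseDisjoint id ∧ #𝒰 = c}

/-- `H` is a closed G_λ set: closed and the intersection of at most λ open sets. -/
def IsClosedGLambda (lam : Cardinal.{u}) {X : Type u} [TopologicalSpace X] (H : Set X) : Prop :=
  IsClosed H ∧ ∃ 𝒰 : Set (Set X), (∀ U ∈ 𝒰, IsOpen U) ∧ #𝒰 ≤ lam ∧ H = ⋂₀ 𝒰

/-- X ∈ Γ(λ): every closed G_λ set has density ≤ λ. -/
def InGamma (lam : Cardinal.{u}) (X : Type u) [TopologicalSpace X] : Prop :=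
  ∀ H : Set X, IsClosedGLambda lam H → tdensity ↥H ≤ lam

/-- `S` witnesses `X ∈ Δ(λ)`. -/
def DeltaWitness (lam : Cardinal.{u}) (X : Type u) [TopologicalSpace X] (S : Set X) : Prop :=
  Dense S ∧
  (∀ T : Set X, T ⊆ S → #T < lam → tweight ↥(closure T) < lam) ∧
  (∀ (Y : Type u) (_ : TopologicalSpace Y), T2Space Y → ∀ f : X → Y,
     Continuous f → Surjective f → tweight Y = lam → #(f '' S) = lam)

/-- X ∈ Δ(λ). -/
def InDelta (lam : Cardinal.{u}) (X : Type u) [TopologicalSpace X] : Prop :=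
  lam ≤ tweight X ∧ ∃ S : Set X, DeltaWitness lam X S

/-- A canonical discrete space of cardinality `c`. -/
instance (c : Cardinal.{u}) : TopologicalSpace c.out := ⊥

instance (c : Cardinal.{u}) : DiscreteTopology c.out := ⟨rfl⟩

/-- A(μ): one-point compactification of a discrete space of cardinality μ. -/
def ACompact (μ : Cardinal.{u}) : Type u := OnePoint μ.out

instance (μ : Cardinal.{u}) : TopologicalSpace (ACompact μ) :=
  inferInstanceAs (TopologicalSpace (OnePoint μ.out))

/-- A(μ)^κ. -/
def APow (μ κ : Cardinal.{u}) : Type u := κ.out → ACompact μ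

instance (μ κ : Cardinal.{u}) : TopologicalSpace (APow μ κ) :=
  inferInstanceAs (TopologicalSpace (κ.out → ACompact μ))

/-- The set of finite-support points of A(μ)^κ. -/
def finSupport (μ κ : Cardinal.{u}) : Set (APow μ κ) :=
  {x | {ξ | x ξ ≠ (OnePoint.infty : OnePoint μ.out)}.Finite}

/-- X is polyadic: a continuous image of some A(μ)^κ. -/
def IsPolyadic (X : Type u) [TopologicalSpace X] : Prop :=
  ∃ μ κ : Cardinal.{u}, ℵ₀ ≤ μ ∧ ∃ f : APow μ κ → X, Continuous f ∧ Surjective f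

section Aux
open Cardinal Set Function TopologicalSpace

lemma cylinder_cover {ι : Type u} {Z : ι → Type u} [∀ i, TopologicalSpace (Z i)]
    {K W : Set (∀ i, Z i)} (hK : IsCompact K) (hW : IsOpen W) (hKW : K ⊆ W) :
    ∃ I : Finset ι, ∀ z ∈ K, ∀ z', (∀ i ∈ I, z i = z' i) → z' ∈ W := by
  classical
  have hpt : ∀ x : K, ∃ (I : Finset ι) (u : ∀ i, Set (Z i)),
      (∀ a ∈ I, IsOpen (u a) ∧ x.1 a ∈ u a) ∧ (I : Set ι).pi u ⊆ W :=
    fun x => isOpen_pi_iff.mp hW x (hKW x.2)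
  choose I u hu hsub using hpt
  have hcov : K ⊆ ⋃ x : K, ((I x : Finset ι) : Set ι).pi (u x) := fun z hz =>
    mem_iUnion.mpr ⟨⟨z, hz⟩, fun i hi => (hu ⟨z, hz⟩ i hi).2⟩
  obtain ⟨t, ht⟩ := hK.elim_finite_subcover (fun x : K => ((I x : Finset ι) : Set ι).pi (u x))
    (fun x => isOpen_set_pi (I x).finite_toSet (fun i hi => (hu x i hi).1)) hcov
  refine ⟨t.biUnion (fun x => I x), fun z hz z' hagree => ?_⟩
  obtain ⟨x, hxt, hzx⟩ := Set.mem_iUnion₂.mp (ht hz)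
  refine hsub x (fun i hi => ?_)
  rw [← hagree i (Finset.mem_biUnion.mpr ⟨x, hxt, hi⟩)]
  exact hzx i hi

lemma sep_basis {X : Type u} [TopologicalSpace X] [T25Space X] {B : Set (Set X)}
    (hB : IsTopologicalBasis B) {a b : X} (hab : a ≠ b) :
    ∃ U ∈ B, ∃ V ∈ B, a ∈ U ∧ b ∈ V ∧ Disjoint (closure U) (closure V) := by
  have hd := T25Space.t2_5 hab
  rw [Filter.disjoint_iff] at hd
  obtain ⟨s, hs, t, ht, hst⟩ := hd
  rw [Filter.mem_lift'_sets (monotone_closure X)] at hs ht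
  obtain ⟨s', hs', hss⟩ := hs
  obtain ⟨t', ht', htt⟩ := ht
  obtain ⟨U, hU, haU, hUs⟩ := hB.mem_nhds_iff.mp hs'
  obtain ⟨V, hV, hbV, hVt⟩ := hB.mem_nhds_iff.mp ht'
  exact ⟨U, hU, V, hV, haU, hbV,
    hst.mono ((closure_mono hUs).trans hss) ((closure_mono hVt).trans htt)⟩

instance (μ : Cardinal.{u}) : CompactSpace (ACompact μ) :=
  inferInstanceAs (CompactSpace (OnePoint μ.out))

instance (μ κ : Cardinal.{u}) : CompactSpace (APow μ κ) :=
  inferInstanceAs (CompactSpace (κ.out → ACompact μ))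

/-- tweight is attained by some basis. -/
lemma exists_basis_tweight (X : Type u) [TopologicalSpace X] :
    ∃ B : Set (Set X), IsTopologicalBasis B ∧ #B = tweight X := by
  have hne : {c : Cardinal.{u} | ∃ B : Set (Set X), IsTopologicalBasis B ∧ #B = c}.Nonempty :=
    ⟨_, {U : Set X | IsOpen U}, isTopologicalBasis_opens, rfl⟩
  exact csInf_mem hne

/-- the finite-weight case helper: a continuous surjection from A(μ)^κ onto a
finite nonempty T1 space, provided κ.out is nonempty. -/
lemma finite_case {X : Type u} [TopologicalSpace X] [T1Space X] [Finite X] [Nonempty X]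
    (μ κ : Cardinal.{u}) (hμ : ℵ₀ ≤ μ) (hκ : Nonempty κ.out) :
    ∃ g : APow μ κ → X, Continuous g ∧ Surjective g := by
  classical
  obtain ⟨x0⟩ := ‹Nonempty X›
  have hXμ : #X ≤ #μ.out := by
    rw [Cardinal.mk_out]
    exact le_trans (Cardinal.lt_aleph0_of_finite X).le hμ
  obtain ⟨e⟩ := Cardinal.le_def _ _ |>.mp hXμ
  let q : ACompact μ → X := fun z =>
    match z with
    | none => x0
    | some m => Function.extend e id (fun _ => x0) m
  have hqs : ∀ x : X, q (some (e x)) = x := fun x => by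
    simp only [q, e.injective.extend_apply, id]
  have hqc : Continuous q := by
    rw [continuous_def]
    intro s _
    by_cases hx0 : x0 ∈ s
    · have hmem : (OnePoint.infty : OnePoint μ.out) ∈ q ⁻¹' s := hx0
      rw [show IsOpen (q ⁻¹' s) ↔ _ from OnePoint.isOpen_iff_of_mem hmem]
      have hfin : (((↑) : μ.out → OnePoint μ.out) ⁻¹' (q ⁻¹' s))ᶜ.Finite := by
        apply Set.Finite.subset (Set.finite_range e)
        intro m hm
        simp only [Set.mem_compl_iff, Set.mem_preimage] at hm
        by_contra hre
        exact hm (by show Function.extend e id (fun _ => x0) m ∈ s; rw [Function.extend_apply' _ _ _ hre]; exact hx0)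
      exact ⟨hfin.isClosed, hfin.isCompact⟩
    · have hmem : (OnePoint.infty : OnePoint μ.out) ∉ q ⁻¹' s := hx0
      rw [show IsOpen (q ⁻¹' s) ↔ _ from OnePoint.isOpen_iff_of_notMem hmem]
      exact isOpen_discrete _
  obtain ⟨ξ0⟩ := hκ
  refine ⟨fun x => q (x ξ0), hqc.comp (continuous_apply ξ0), fun x => ?_⟩
  exact ⟨fun _ => some (e x), hqs x⟩

end Aux
/-- a μ-adic space of weight κ is a continuous image of A(μ)^κ. -/
theorem statement15 {X : Type u} [TopologicalSpace X] [CompactSpace X] [T2Space X]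
    (μ τ : Cardinal.{u}) (hμ : ℵ₀ ≤ μ)
    (f : APow μ τ → X) (hf : Continuous f) (hsurj : Surjective f) :
    ∃ g : APow μ (tweight X) → X, Continuous g ∧ Surjective g := by
  classical
  set κ := tweight X with hκdef
  obtain ⟨B, hB, hBcard⟩ := exists_basis_tweight X
  have hXne : Nonempty X := ⟨f (fun _ => OnePoint.infty)⟩
  by_cases hκinf : ℵ₀ ≤ κ
  · -- main case
    -- for each pair of basic sets with disjoint closures, a finite set of coordinates
    have hpair : ∀ p : ↥B × ↥B, Disjoint (closure p.1.1) (closure p.2.1) →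
        ∃ I : Finset τ.out, ∀ z ∈ f ⁻¹' closure p.1.1, ∀ z',
          (∀ i ∈ I, z i = z' i) → z' ∈ f ⁻¹' (closure p.2.1)ᶜ := by
      intro p hd
      refine cylinder_cover ?_ ?_ ?_
      · exact (IsClosed.preimage hf isClosed_closure).isCompact
      · exact (isClosed_closure.preimage hf).isOpen_compl
      · intro z hz
        exact fun hz' => (Set.disjoint_left.mp hd hz) hz'
    let Jp : ↥B × ↥B → Finset τ.out := fun p =>
      if h : Disjoint (closure p.1.1) (closure p.2.1) then (hpair p h).choose else ∅
    have hJp : ∀ p : ↥B × ↥B, Disjoint (closure p.1.1) (closure p.2.1) →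
        ∀ z ∈ f ⁻¹' closure p.1.1, ∀ z',
          (∀ i ∈ Jp p, z i = z' i) → z' ∈ f ⁻¹' (closure p.2.1)ᶜ := by
      intro p h
      simpa only [Jp, dif_pos h] using (hpair p h).choose_spec
    set J : Set τ.out := ⋃ p : ↥B × ↥B, ↑(Jp p) with hJdef
    have hJcard : #J ≤ κ := by
      refine le_trans (Cardinal.mk_iUnion_le _) ?_
      have h1 : #(↥B × ↥B) = κ := by
        rw [Cardinal.mk_prod, hBcard, ← hκdef]
        simpa using Cardinal.mul_eq_self hκinf
      have h2 : ⨆ p : ↥B × ↥B, #↑((Jp p : Finset τ.out) : Set τ.out) ≤ ℵ₀ :=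
        ciSup_le' fun p => ((Jp p).finite_toSet.lt_aleph0).le
      calc #(↥B × ↥B) * ⨆ p : ↥B × ↥B, #↑((Jp p : Finset τ.out) : Set τ.out)
          ≤ κ * ℵ₀ := by rw [h1]; exact mul_le_mul_right h2 _
        _ ≤ κ * κ := mul_le_mul_right hκinf _
        _ = κ := Cardinal.mul_eq_self hκinf
    obtain ⟨ι⟩ : Nonempty (↥J ↪ κ.out) := by
      rw [← Cardinal.le_def, Cardinal.mk_out]
      exact hJcard
    -- the dependence claim
    have key : ∀ z z' : APow μ τ, (∀ ξ ∈ J, z ξ = z' ξ) → f z = f z' := by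
      intro z z' hagree
      by_contra hne
      obtain ⟨U, hU, V, hV, hzU, hzV, hd⟩ := sep_basis hB hne
      set p : ↥B × ↥B := (⟨U, hU⟩, ⟨V, hV⟩)
      have hz : z ∈ f ⁻¹' closure U := subset_closure hzU
      have := hJp p hd z hz z' (fun i hi => hagree i
        (Set.mem_iUnion.mpr ⟨p, hi⟩))
      exact this (subset_closure hzV)
    -- build g
    let h : APow μ κ → APow μ τ := fun x ξ =>
      if hξ : ξ ∈ J then x (ι ⟨ξ, hξ⟩) else OnePoint.infty
    have hhc : Continuous h := by
      refine continuous_pi fun ξ => ?_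
      by_cases hξ : ξ ∈ J
      · simp only [h, hξ, ↓reduceDIte]; exact continuous_apply (ι ⟨ξ, hξ⟩)
      · simp only [h, hξ, ↓reduceDIte]; exact
          continuous_const (y := (OnePoint.infty : ACompact μ))
    refine ⟨f ∘ h, hf.comp hhc, fun y => ?_⟩
    obtain ⟨z, hz⟩ := hsurj y
    refine ⟨Function.extend (fun j : ↥J => ι j) (fun j => z j.1)
      (fun _ => OnePoint.infty), ?_⟩
    have hιinj : Function.Injective (fun j : ↥J => ι j) := fun a b hab => ι.injective hab
    have : f (h (Function.extend (fun j : ↥J => ι j) (fun j => z j.1)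
        (fun _ => OnePoint.infty))) = f z := by
      apply key
      intro ξ hξ
      simp only [h, hξ, ↓reduceDIte]
      exact hιinj.extend_apply _ _ ⟨ξ, hξ⟩
    rw [← hz]; exact this
  · -- finite case
    have hκfin : κ < ℵ₀ := lt_of_not_ge hκinf
    have hBfin : Finite ↥B := by
      rw [← Cardinal.lt_aleph0_iff_finite, hBcard]; exact hκfin
    have hXfin : Finite X := by
      rw [← Cardinal.lt_aleph0_iff_finite]
      have hinj : Function.Injective (fun x : X => {U : ↥B | x ∈ U.1}) := by
        intro a b hab
        by_contra hne
        obtain ⟨U, hU, haU, hsub⟩ := hB.exists_subset_of_mem_open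
          (show a ∈ ({b}ᶜ : Set X) from hne) isClosed_singleton.isOpen_compl
        have : b ∈ U := by
          have := congrFun (congrArg Membership.mem hab)
          exact (Set.ext_iff.mp hab ⟨U, hU⟩).mp haU
        exact hsub this rfl
      calc #X ≤ #(Set ↥B) := Cardinal.mk_le_of_injective hinj
        _ < ℵ₀ := by
          rw [Cardinal.mk_set]
          exact Cardinal.power_lt_aleph0 (by exact_mod_cast Cardinal.nat_lt_aleph0 2) (Cardinal.lt_aleph0_iff_finite.mpr hBfin)
    have hκpos : κ ≠ 0 := by
      intro h0
      have h0' : #↑B = 0 := by rw [hBcard, ← hκdef, h0]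
      have hBe : B = ∅ := Set.isEmpty_coe_sort.mp (Cardinal.mk_eq_zero_iff.mp h0')
      have huniv := hB.sUnion_eq
      rw [hBe, Set.sUnion_empty] at huniv
      obtain ⟨x⟩ := hXne
      exact Set.notMem_empty x (huniv.symm ▸ Set.mem_univ x)
    have hκne : Nonempty κ.out := by
      rw [← Cardinal.mk_ne_zero_iff, Cardinal.mk_out]
      exact hκpos
    exact finite_case μ κ hμ hκne
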